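/- Let n ≥ 3 be an integer, κ1, κ2, κ3, κ₋₁, κ₋ ≥ 0, and let (p, q, r) be the global solution of the ODE system with admissible initial data (p0, q0, r0) ∈ (0,∞)³. Then for all t ≥ 0, r(t) ≥ (2/n) q(t) ≥ (2 q0 / n) · exp(−κ₋ t). -/

import Mathlib

/-- The right-hand side of the `p`-equation. -/
noncomputable def Fp (n : ℕ) (k1 k2 k3 km1 km p q r : ℝ) : ℝ :=
  (k1 - k3 * p) * (n * r - p - 2 * q)
    + km * q * (1 - (n - 1) * p / ((n - 2) * r)) - (k2 + km1) * p

/-- The right-hand side of the `q`-equation. -/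
noncomputable def Fq (n : ℕ) (k1 k2 k3 km1 km p q r : ℝ) : ℝ :=
  k2 * p + k3 * p * (n * r - p - 2 * q) - km * q

/-- The right-hand side of the `r`-equation. -/
noncomputable def Fr (n : ℕ) (k1 k2 k3 km1 km p q r : ℝ) : ℝ :=
  k2 * p - km * q * ((n * r - 2 * q) / ((n - 2) * r))


open Set Asymptotics Filter

lemma hasDerivAt_min_sq {f : ℝ → ℝ} {f' t : ℝ} (h : HasDerivAt f f' t) :
    HasDerivAt (fun s => (min (f s) 0) ^ 2) (2 * min (f t) 0 * f') t := by
  rcases lt_trichotomy (f t) 0 with hlt | heq | hgt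
  · have hev : (fun s => (min (f s) 0) ^ 2) =ᶠ[nhds t] fun s => (f s) ^ 2 := by
      filter_upwards [h.continuousAt (Iio_mem_nhds hlt)] with s hs
      rw [min_eq_left (le_of_lt hs)]
    have h2 : HasDerivAt (fun s => (f s) ^ 2) (2 * f t * f') t := by
      simpa [mul_comm, mul_assoc] using h.fun_pow 2
    rw [min_eq_left hlt.le]
    exact h2.congr_of_eventuallyEq hev
  · -- f t = 0
    rw [hasDerivAt_iff_isLittleO]
    have h0 : min (f t) 0 = 0 := by rw [heq]; simp
    have hO : (fun s => f s - f t) =O[nhds t] fun s => s - t := h.isBigO_sub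
    have h1 : (fun s => (min (f s) 0) ^ 2) =O[nhds t]
        fun s => (f s - f t) * (f s - f t) := by
      apply IsBigO.of_bound 1
      filter_upwards with s
      rw [heq, sub_zero, one_mul]
      have habs : |min (f s) 0| ≤ |f s| := by
        rcases le_or_gt (f s) 0 with hh | hh
        · rw [min_eq_left hh]
        · rw [min_eq_right hh.le]; simp [abs_nonneg]
      have : (min (f s) 0) ^ 2 ≤ (f s) ^ 2 := by
        rw [← sq_abs (min (f s) 0), ← sq_abs (f s)]
        exact pow_le_pow_left₀ (abs_nonneg _) habs 2
      calc ‖(min (f s) 0) ^ 2‖ = (min (f s) 0) ^ 2 := by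
            rw [Real.norm_eq_abs, abs_of_nonneg (sq_nonneg _)]
        _ ≤ (f s) ^ 2 := this
        _ ≤ ‖f s * f s‖ := by rw [Real.norm_eq_abs, sq]; exact le_abs_self _
    have h2 : (fun s => (f s - f t) * (f s - f t)) =O[nhds t]
        fun s => (s - t) * (s - t) := hO.mul hO
    have h3 : (fun s : ℝ => (s - t) * (s - t)) =o[nhds t] fun s => s - t := by
      have hten : Tendsto (fun s : ℝ => s - t) (nhds t) (nhds 0) := by
        simpa using (continuous_sub_right t).tendsto t
      have hlo : (fun s : ℝ => s - t) =o[nhds t] (fun _ => (1 : ℝ)) :=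
        (isLittleO_one_iff ℝ).2 hten
      simpa using hlo.mul_isBigO (isBigO_refl (fun s : ℝ => s - t) (nhds t))
    have hfinal := (h1.trans h2).trans_isLittleO h3
    simpa [h0] using hfinal
  · have hev : (fun s => (min (f s) 0) ^ 2) =ᶠ[nhds t] fun _ => (0 : ℝ) := by
      filter_upwards [h.continuousAt (Ioi_mem_nhds hgt)] with s hs
      have hs' : (0:ℝ) < f s := hs
      simp [min_eq_right (le_of_lt hs')]
    have h2 : HasDerivAt (fun s => (min (f s) 0) ^ 2) 0 t :=
      (hasDerivAt_const t 0).congr_of_eventuallyEq hev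
    simpa [min_eq_right hgt.le] using h2

lemma invariance_aux (A D G P a b : ℝ → ℝ)
    (hAnn : ∀ s, 0 ≤ s → 0 ≤ A s) (hDnn : ∀ s, 0 ≤ s → 0 ≤ D s)
    (hGnn : ∀ s, 0 ≤ s → 0 ≤ G s) (hPnn : ∀ s, 0 ≤ s → 0 ≤ P s)
    (hbound : ∀ T, 0 ≤ T → ∃ K, ∀ s ∈ Set.Icc (0:ℝ) T, D s + G s ≤ K)
    (ha' : ∀ s, 0 ≤ s → HasDerivAt a (-(A s) * a s + P s + D s * b s) s)
    (hb' : ∀ s, 0 ≤ s → HasDerivAt b (G s * a s - D s * b s) s)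
    (ha0 : 0 ≤ a 0) (hb0 : 0 ≤ b 0) :
    ∀ t, 0 ≤ t → 0 ≤ a t ∧ 0 ≤ b t := by
  intro T hT
  obtain ⟨K, hK⟩ := hbound T hT
  have hf' : ∀ s, 0 ≤ s → HasDerivAt (fun u => (min (a u) 0) ^ 2 + (min (b u) 0) ^ 2)
      (2 * min (a s) 0 * (-(A s) * a s + P s + D s * b s)
        + 2 * min (b s) 0 * (G s * a s - D s * b s)) s :=
    fun s hs => (hasDerivAt_min_sq (ha' s hs)).add (hasDerivAt_min_sq (hb' s hs))
  have main := le_gronwallBound_of_liminf_deriv_right_le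
      (f := fun u => (min (a u) 0) ^ 2 + (min (b u) 0) ^ 2)
      (f' := fun s => 2 * min (a s) 0 * (-(A s) * a s + P s + D s * b s)
        + 2 * min (b s) 0 * (G s * a s - D s * b s))
      (δ := 0) (K := K) (ε := 0) (a := 0) (b := T)
      (fun s hs => (hf' s hs.1).continuousAt.continuousWithinAt)
      (fun s hs r hr => ((hf' s hs.1).hasDerivWithinAt).liminf_right_slope_le hr)
      (by simp [min_eq_right ha0, min_eq_right hb0])
      ?_
  · have hfT := main T (Set.right_mem_Icc.2 hT)
    rw [sub_zero, gronwallBound_ε0, zero_mul] at hfT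
    have hfT' : (min (a T) 0) ^ 2 + (min (b T) 0) ^ 2 ≤ 0 := hfT
    have hA2 : (min (a T) 0) ^ 2 = 0 :=
      le_antisymm (by nlinarith [sq_nonneg (min (b T) 0), hfT']) (sq_nonneg _)
    have hB2 : (min (b T) 0) ^ 2 = 0 :=
      le_antisymm (by nlinarith [sq_nonneg (min (a T) 0), hfT']) (sq_nonneg _)
    constructor
    · exact min_eq_right_iff.1 ((pow_eq_zero_iff (by norm_num : (2:ℕ) ≠ 0)).1 hA2)
    · exact min_eq_right_iff.1 ((pow_eq_zero_iff (by norm_num : (2:ℕ) ≠ 0)).1 hB2)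
  · intro s hs
    have hs0 := hs.1
    have hKs := hK s ⟨hs.1, hs.2.le⟩
    have hAn := hAnn s hs0
    have hDn := hDnn s hs0
    have hGn := hGnn s hs0
    have hPn := hPnn s hs0
    have hmA0 : min (a s) 0 ≤ 0 := min_le_right _ _
    have hmB0 : min (b s) 0 ≤ 0 := min_le_right _ _
    have h1 : 0 ≤ min (a s) 0 * a s := by
      rcases le_or_gt (a s) 0 with h | h
      · rw [min_eq_left h]; exact mul_self_nonneg _
      · rw [min_eq_right h.le, zero_mul]
    have h2 : 0 ≤ min (b s) 0 * b s := by
      rcases le_or_gt (b s) 0 with h | h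
      · rw [min_eq_left h]; exact mul_self_nonneg _
      · rw [min_eq_right h.le, zero_mul]
    have h3 : min (a s) 0 * b s ≤ min (a s) 0 * min (b s) 0 :=
      mul_le_mul_of_nonpos_left (min_le_left _ _) hmA0
    have h4 : min (b s) 0 * a s ≤ min (b s) 0 * min (a s) 0 :=
      mul_le_mul_of_nonpos_left (min_le_left _ _) hmB0
    have h5 : 2 * (min (a s) 0 * min (b s) 0) ≤ (min (a s) 0) ^ 2 + (min (b s) 0) ^ 2 :=
      by have := two_mul_le_add_sq (min (a s) 0) (min (b s) 0); linarith
    have hT1 : 0 ≤ A s * (min (a s) 0 * a s) := mul_nonneg hAn h1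
    have hT2 : P s * min (a s) 0 ≤ 0 := mul_nonpos_of_nonneg_of_nonpos hPn hmA0
    have hT3 : D s * (min (a s) 0 * b s) ≤ D s * (min (a s) 0 * min (b s) 0) :=
      mul_le_mul_of_nonneg_left h3 hDn
    have hT3' : D s * (2 * (min (a s) 0 * min (b s) 0)) ≤
        D s * ((min (a s) 0) ^ 2 + (min (b s) 0) ^ 2) := mul_le_mul_of_nonneg_left h5 hDn
    have hT4 : G s * (min (b s) 0 * a s) ≤ G s * (min (b s) 0 * min (a s) 0) :=
      mul_le_mul_of_nonneg_left h4 hGn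
    have hT4' : G s * (2 * (min (a s) 0 * min (b s) 0)) ≤
        G s * ((min (a s) 0) ^ 2 + (min (b s) 0) ^ 2) := mul_le_mul_of_nonneg_left h5 hGn
    have hT5 : 0 ≤ D s * (min (b s) 0 * b s) := mul_nonneg hDn h2
    have hT6 : (D s + G s) * ((min (a s) 0) ^ 2 + (min (b s) 0) ^ 2) ≤
        K * ((min (a s) 0) ^ 2 + (min (b s) 0) ^ 2) :=
      mul_le_mul_of_nonneg_right hKs (by positivity)
    beta_reduce
    nlinarith [hT1, hT2, hT3, hT3', hT4, hT4', hT5, hT6]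

/-- Lower exponential bound: `r(t) ≥ (2/n) q(t) ≥ (2 q0 / n) exp (-κ₋ t)`. -/
theorem stmt_2 (n : ℕ) (hn : 3 ≤ n) (k1 k2 k3 km1 km : ℝ)
    (hk1 : 0 ≤ k1) (hk2 : 0 ≤ k2) (hk3 : 0 ≤ k3) (hkm1 : 0 ≤ km1) (hkm : 0 ≤ km)
    (p0 q0 r0 : ℝ) (hp0 : 0 < p0) (hq0 : 0 < q0) (hr0 : 0 < r0)
    (hadm1 : 0 ≤ (n : ℝ) * r0 - p0 - 2 * q0) (hadm2 : r0 ≤ q0)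
    (p q r : ℝ → ℝ)
    (hinit : p 0 = p0 ∧ q 0 = q0 ∧ r 0 = r0)
    (hode : ∀ t, 0 ≤ t →
      HasDerivAt p (Fp n k1 k2 k3 km1 km (p t) (q t) (r t)) t ∧
      HasDerivAt q (Fq n k1 k2 k3 km1 km (p t) (q t) (r t)) t ∧
      HasDerivAt r (Fr n k1 k2 k3 km1 km (p t) (q t) (r t)) t)
    (hpos : ∀ t, 0 ≤ t → 0 < p t ∧ 0 < q t ∧ 0 < r t) :
    ∀ t, 0 ≤ t →
      2 / (n : ℝ) * q t ≤ r t ∧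
      2 * q0 / (n : ℝ) * Real.exp (-km * t) ≤ 2 / (n : ℝ) * q t := by
  obtain ⟨hip, hiq, hir⟩ := hinit
  have hn3 : (3 : ℝ) ≤ (n : ℝ) := by exact_mod_cast hn
  have hn0 : (0 : ℝ) < (n : ℝ) := by linarith
  have hn2 : (0 : ℝ) < (n : ℝ) - 2 := by linarith
  have hn1 : (0 : ℝ) ≤ (n : ℝ) - 1 := by linarith
  -- the invariant quantities
  have hinv : ∀ t, 0 ≤ t → 0 ≤ (n : ℝ) * r t - p t - 2 * q t ∧ 0 ≤ q t - r t := by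
    apply invariance_aux
      (fun s => k1 + k3 * p s + km * q s * ((n : ℝ) - 1) / (((n : ℝ) - 2) * r s))
      (fun s => 2 * km * q s / (((n : ℝ) - 2) * r s))
      (fun s => k3 * p s)
      (fun s => (((n : ℝ) - 1) * k2 + km1) * p s)
    · intro s hs
      obtain ⟨hpp, hqp, hrp⟩ := hpos s hs
      have hden : 0 < ((n : ℝ) - 2) * r s := mul_pos hn2 hrp
      have : 0 ≤ km * q s * ((n : ℝ) - 1) / (((n : ℝ) - 2) * r s) :=
        div_nonneg (by positivity) hden.le
      nlinarith [mul_nonneg hk3 hpp.le]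
    · intro s hs
      obtain ⟨hpp, hqp, hrp⟩ := hpos s hs
      have hden : 0 < ((n : ℝ) - 2) * r s := mul_pos hn2 hrp
      exact div_nonneg (by positivity) hden.le
    · intro s hs
      exact mul_nonneg hk3 (hpos s hs).1.le
    · intro s hs
      have := (hpos s hs).1
      nlinarith [mul_nonneg hn1 hk2]
    · -- bound on D + G on compacts
      intro T hT
      have hcont : ContinuousOn
          (fun s => 2 * km * q s / (((n : ℝ) - 2) * r s) + k3 * p s) (Icc 0 T) := by
        intro s hs
        obtain ⟨hp', hq', hr'⟩ := hode s hs.1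
        obtain ⟨hpp, hqp, hrp⟩ := hpos s hs.1
        have hden : (((n : ℝ) - 2) * r s) ≠ 0 := (mul_pos hn2 hrp).ne'
        exact (((continuousAt_const.mul hq'.continuousAt).div
          (continuousAt_const.mul hr'.continuousAt) hden).add
          (continuousAt_const.mul hp'.continuousAt)).continuousWithinAt
      obtain ⟨K, hK⟩ := isCompact_Icc.exists_bound_of_continuousOn hcont
      exact ⟨K, fun s hs => le_trans (le_abs_self _) (by simpa [Real.norm_eq_abs] using hK s hs)⟩
    · -- derivative of a
      intro s hs
      obtain ⟨hp', hq', hr'⟩ := hode s hs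
      obtain ⟨hpp, hqp, hrp⟩ := hpos s hs
      have hd := ((HasDerivAt.const_mul ((n : ℝ)) hr').fun_sub hp').fun_sub
        (HasDerivAt.const_mul (2 : ℝ) hq')
      refine hd.congr_deriv ?_
      have hrne : r s ≠ 0 := hrp.ne'
      have hn2ne : ((n : ℝ) - 2) ≠ 0 := hn2.ne'
      simp only [Fp, Fq, Fr]
      field_simp
      ring
    · -- derivative of b
      intro s hs
      obtain ⟨hp', hq', hr'⟩ := hode s hs
      obtain ⟨hpp, hqp, hrp⟩ := hpos s hs
      have hd := hq'.fun_sub hr'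
      refine hd.congr_deriv ?_
      have hrne : r s ≠ 0 := hrp.ne'
      have hn2ne : ((n : ℝ) - 2) ≠ 0 := hn2.ne'
      simp only [Fp, Fq, Fr]
      field_simp
      ring
    · rw [hip, hiq, hir]; exact hadm1
    · rw [hiq, hir]; linarith
  intro t ht
  obtain ⟨hat, hbt⟩ := hinv t ht
  obtain ⟨hpp, hqp, hrp⟩ := hpos t ht
  constructor
  · rw [div_mul_eq_mul_div, div_le_iff₀ hn0]
    nlinarith
  · have hmono : MonotoneOn (fun s => q s * Real.exp (km * s)) (Icc 0 t) := by
      apply monotoneOn_of_deriv_nonneg (convex_Icc 0 t)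
      · intro s hs
        exact ((hode s hs.1).2.1.continuousAt.mul
          (Real.continuous_exp.comp (continuous_const.mul continuous_id)).continuousAt).continuousWithinAt
      · intro s hs
        rw [interior_Icc] at hs
        have hq' := (hode s hs.1.le).2.1
        have hexp : HasDerivAt (fun u => Real.exp (km * u)) (Real.exp (km * s) * (km * 1)) s :=
          (Real.hasDerivAt_exp (km * s)).comp s ((hasDerivAt_id s).const_mul km)
        exact (hq'.mul hexp).differentiableAt.differentiableWithinAt
      · intro s hs
        rw [interior_Icc] at hs
        have hs0 : (0 : ℝ) ≤ s := hs.1.le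
        have hq' := (hode s hs0).2.1
        have hexp : HasDerivAt (fun u => Real.exp (km * u)) (Real.exp (km * s) * (km * 1)) s :=
          (Real.hasDerivAt_exp (km * s)).comp s ((hasDerivAt_id s).const_mul km)
        rw [(hq'.fun_mul hexp).deriv]
        obtain ⟨hain, _⟩ := hinv s hs0
        obtain ⟨hpp', hqp', hrp'⟩ := hpos s hs0
        have hexppos := Real.exp_pos (km * s)
        simp only [Fq]
        nlinarith [mul_nonneg (mul_nonneg hk2 hpp'.le) hexppos.le,
          mul_nonneg (mul_nonneg (mul_nonneg hk3 hpp'.le) hain) hexppos.le]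
    have hm := hmono (left_mem_Icc.2 ht) (right_mem_Icc.2 ht) ht
    simp only [mul_zero, Real.exp_zero, mul_one, hiq] at hm
    have hep : 0 < Real.exp (km * t) := Real.exp_pos _
    have h3 : q0 / Real.exp (km * t) ≤ q t := (div_le_iff₀ hep).2 hm
    have h4 : (0 : ℝ) ≤ 2 / (n : ℝ) := by positivity
    calc 2 * q0 / (n : ℝ) * Real.exp (-km * t)
        = 2 / (n : ℝ) * (q0 / Real.exp (km * t)) := by
          rw [neg_mul, Real.exp_neg]; ring
      _ ≤ 2 / (n : ℝ) * q t := mul_le_mul_of_nonneg_left h3 h4
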